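/- Let e ≥ 2, let i be a residue modulo e, and let μ be an e-regular partition having exactly k removable nodes of residue i. Let μ̄ be the partition obtained from μ by removing all k of these removable nodes. If μ̄ has exactly k addable nodes of residue i, then μ̄ is e-regular. -/
import Mathlib


noncomputable section

/-- Let `e ≥ 2`, let `i` be a residue modulo `e`, and let `μ` be an
`e`-regular partition (written as a weakly decreasing, eventually zero sequence `μ 0 ≥ μ 1 ≥ ⋯`
of nonnegative integers, `μ r` being the `(r+1)`-st part) having exactly `k` removable nodes
of residue `i`.  Here the node in row `r` and column `c` (both `0`-indexed) has residue
`(c - r) mod e`; the removable node of row `r` exists iff `μ (r+1) < μ r` and sits in column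
`μ r - 1`, and the addable node of row `r` exists iff `r = 0` or `μ r < μ (r-1)` and sits in
column `μ r`.  Let `μ̄` be obtained from `μ` by removing all `k` removable nodes of residue
`i`.  If `μ̄` has exactly `k` addable nodes of residue `i`, then `μ̄` is `e`-regular, i.e. it
has no `e` equal nonzero parts. -/
theorem eRegular_of_remove_all_removable_nodes
    (e : ℕ) (he : 2 ≤ e) (i : ZMod e) (μ : ℕ → ℕ)
    (hμ_dec : Antitone μ) (hμ_fin : ∃ N, μ N = 0)
    (hμ_reg : ∀ r : ℕ, μ (r + (e - 1)) = μ r → μ r = 0)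
    (k : ℕ)
    (hrem : {r : ℕ | μ (r + 1) < μ r ∧
      (((μ r : ℤ) - 1 - (r : ℤ) : ℤ) : ZMod e) = i}.ncard = k)
    (μbar : ℕ → ℕ)
    (hbar : ∀ r : ℕ, μbar r =
      if μ (r + 1) < μ r ∧ (((μ r : ℤ) - 1 - (r : ℤ) : ℤ) : ZMod e) = i
      then μ r - 1 else μ r)
    (hadd : {r : ℕ | (r = 0 ∨ μbar r < μbar (r - 1)) ∧
      (((μbar r : ℤ) - (r : ℤ) : ℤ) : ZMod e) = i}.ncard = k) :
    ∀ r : ℕ, μbar (r + (e - 1)) = μbar r → μbar r = 0 := by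
  classical
  -- For each row `s`, either the removable node of row `s` was removed (and
  -- `μbar s + 1 = μ s`), or nothing was removed in row `s` (and `μbar s = μ s`).
  have hbar' : ∀ s : ℕ,
      ((μ (s + 1) < μ s ∧ (((μ s : ℤ) - 1 - (s : ℤ) : ℤ) : ZMod e) = i) ∧
        μbar s + 1 = μ s) ∨
      (¬ (μ (s + 1) < μ s ∧ (((μ s : ℤ) - 1 - (s : ℤ) : ℤ) : ZMod e) = i) ∧
        μbar s = μ s) := by
    intro s
    by_cases h : μ (s + 1) < μ s ∧ (((μ s : ℤ) - 1 - (s : ℤ) : ℤ) : ZMod e) = i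
    · left
      refine ⟨h, ?_⟩
      rw [hbar s, if_pos h]
      omega
    · right
      refine ⟨h, ?_⟩
      rw [hbar s, if_neg h]
  have hle : ∀ s, μbar s ≤ μ s := by
    intro s
    rcases hbar' s with ⟨_, h⟩ | ⟨_, h⟩ <;> omega
  -- μbar is antitone
  have hanti : ∀ s t : ℕ, s ≤ t → μbar t ≤ μbar s := by
    have hsucc : ∀ s : ℕ, μbar (s + 1) ≤ μbar s := by
      intro s
      have h1 : μbar (s + 1) ≤ μ (s + 1) := hle (s + 1)
      have h2 : μ (s + 1) ≤ μ s := hμ_dec (Nat.le_succ s)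
      rcases hbar' s with ⟨hp, h⟩ | ⟨_, h⟩
      · have := hp.1
        omega
      · omega
    intro s t hst
    exact antitone_nat_of_succ_le hsucc hst
  intro r hr
  by_contra hm0
  set m := μbar r with hm
  -- the whole block of rows r, r+1, ..., r+(e-1) of μbar equals m
  have hblock : ∀ j, j ≤ e - 1 → μbar (r + j) = m := by
    intro j hj
    have h1 : μbar (r + j) ≤ m := hanti r (r + j) (Nat.le_add_right r j)
    have h2 : m ≤ μbar (r + j) := by
      have := hanti (r + j) (r + (e - 1)) (by omega)
      omega
    omega
  -- no row of the block other than possibly the top one was removed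
  have hstep1 : ∀ j, 1 ≤ j → j ≤ e - 1 →
      ¬ (μ (r + j + 1) < μ (r + j) ∧
        (((μ (r + j) : ℤ) - 1 - ((r + j : ℕ) : ℤ) : ℤ) : ZMod e) = i) ∧
      μ (r + j) = m := by
    intro j h1 h2
    have hb := hblock j h2
    have hbp := hblock (j - 1) (by omega)
    rcases hbar' (r + j) with ⟨hp, heq⟩ | ⟨hp, heq⟩
    · exfalso
      -- then μ (r+j) = m+1, forcing μ (r+(j-1)) = m+1 and row r+(j-1) removed,
      -- which contradicts removability of row r+(j-1)
      have hμj : μ (r + j) = m + 1 := by omega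
      have hmono : μ (r + j) ≤ μ (r + (j - 1)) := hμ_dec (by omega)
      rcases hbar' (r + (j - 1)) with ⟨hp', heq'⟩ | ⟨hp', heq'⟩
      · have h3 : r + (j - 1) + 1 = r + j := by omega
        have h4 := hp'.1
        rw [h3] at h4
        omega
      · omega
    · exact ⟨hp, by omega⟩
  have hm1 : μ (r + (e - 1)) = m := (hstep1 (e - 1) (by omega) le_rfl).2
  rcases hbar' r with ⟨hpr, heqr⟩ | ⟨hpr, heqr⟩
  · -- the top row was removed: μ r = m + 1, residue of its removable node is i
    have hμr : μ r = m + 1 := by omega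
    have hre : μ (r + e) ≤ m := by
      have := hμ_dec (show r + (e - 1) ≤ r + e by omega)
      omega
    rcases eq_or_lt_of_le hre with heq | hlt
    · -- μ (r+e) = m : rows r+1, ..., r+e of μ are e equal nonzero parts
      have h1 : μ (r + 1) = m := (hstep1 1 le_rfl (by omega)).2
      have h2 := hμ_reg (r + 1)
      rw [show r + 1 + (e - 1) = r + e by omega] at h2
      omega
    · -- μ (r+e) < m : row r+(e-1) has a removable node of residue i, so it was
      -- removed, contradicting μbar (r+(e-1)) = m
      have hPe : μ (r + (e - 1) + 1) < μ (r + (e - 1)) ∧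
          (((μ (r + (e - 1)) : ℤ) - 1 - ((r + (e - 1) : ℕ) : ℤ) : ℤ) : ZMod e) = i := by
        constructor
        · rw [show r + (e - 1) + 1 = r + e by omega]
          omega
        · have hcast : ((μ (r + (e - 1)) : ℤ) - 1 - ((r + (e - 1) : ℕ) : ℤ))
              = ((μ r : ℤ) - 1 - (r : ℤ)) - (e : ℤ) := by
            rw [hm1, hμr]
            push_cast
            omega
          rw [hcast, Int.cast_sub, hpr.2]
          simp
      exact (hstep1 (e - 1) (by omega) le_rfl).1 hPe
  · -- no removal in the block at all: μ has e equal nonzero parts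
    have h2 := hμ_reg r
    omega
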